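/- For every x ∈ ℕ^d and every j ∈ [d], the size satisfies n(g_j(x)) = n(x) + 1. -/

import Mathlib

namespace Spiral

/-- The size `n(x) = n₁ + ⋯ + n_d` of a configuration `x ∈ ℕ^d`. -/
def size {d : ℕ} (x : Fin d → ℕ) : ℕ := ∑ i, x i

/-- The weight `W(x) = Σ_{i<j} (max(0, x_j − x_i) + max(0, x_i − x_j − 1))`
(truncated ℕ-subtraction realizes the `max(0,·)`). -/
def weight {d : ℕ} (x : Fin d → ℕ) : ℕ :=
  ∑ i : Fin d, ∑ j : Fin d, if i < j then (x j - x i) + (x i - x j - 1) else 0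

/-- The configuration `x` as a set of points of `[d] × ℕ`: the point `(i, n)` (seat `i`
0-indexed, level `n`) is encoded as the natural number `n*d + i`. The usual order on the
encodings is exactly the height order `≺` (height `h(i,n) = n + i/d`), and the spiral
shift `δ + s/d` is encoded as `+ s`. -/
def pts (d : ℕ) (x : Fin d → ℕ) : Finset ℕ :=
  Finset.image (fun i : Fin d => x i * d + i.val) Finset.univ

/-- The points of `x` listed in increasing height order: `δ¹(x), …, δ^d(x)`. -/
def sortedPts (d : ℕ) (x : Fin d → ℕ) : List ℕ :=
  (pts d x).sort (· ≤ ·)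

/-- The lowest point strictly above `p` (along the spiral) whose seat lies in `S`. -/
noncomputable def nextPt (d : ℕ) (S : Finset ℕ) (p : ℕ) : ℕ :=
  sInf {q : ℕ | p < q ∧ q % d ∈ S}

/-- The spiral shifting operator `g_j` (for `1 ≤ j ≤ d`): it fixes the lowest `j - 1`
points `δ¹(x), …, δ^{j-1}(x)` and moves each remaining point `δ^k(x)` (`k ≥ j`) to
`δ^k(x) + s_k/d`, where `s_k` is the minimal positive integer such that the seat of
`δ^k(x) + s_k/d` lies in `{i(δ^j(x)), …, i(δ^d(x))}`. The resulting configuration is read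
off from the new point set (which has exactly one point per seat). -/
noncomputable def gOp (d : ℕ) (j : ℕ) (x : Fin d → ℕ) : Fin d → ℕ := fun i =>
  let L := sortedPts d x
  let low := L.take (j - 1)
  let high := L.drop (j - 1)
  let S : Finset ℕ := high.toFinset.image (· % d)
  let Q : Finset ℕ := low.toFinset ∪ (high.map (nextPt d S)).toFinset
  ∑ q ∈ Q.filter (fun q => q % d = i.val), q / d

/-- `g^a := g₁^{a₁} ∘ ⋯ ∘ g_d^{a_d}` (here `a i` is the exponent of `g_{i+1}`). -/
noncomputable def gIter (d : ℕ) (a : Fin d → ℕ) (x : Fin d → ℕ) : Fin d → ℕ :=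
  (List.finRange d).foldr (fun j y => (gOp d (j.val + 1))^[a j] y) x

end Spiral

namespace SpiralAux

noncomputable def sval (d : ℕ) (S : Finset ℕ) (r : ℕ) : ℕ :=
  sInf {s | 0 < s ∧ (r + s) % d ∈ S}

lemma sval_set_nonempty {d : ℕ} (hd : 0 < d) {S : Finset ℕ} (hS : ∀ r ∈ S, r < d)
    (hne : S.Nonempty) (r : ℕ) : {s | 0 < s ∧ (r + s) % d ∈ S}.Nonempty := by
  obtain ⟨r₀, hr₀⟩ := hne
  refine ⟨r₀ + (d - r % d), ?_, ?_⟩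
  · have := Nat.mod_lt r hd; omega
  · have h1 : r / d * d + r % d = r := Nat.div_add_mod' r d
    have h2 : r % d < d := Nat.mod_lt r hd
    have h3 : r + (r₀ + (d - r % d)) = (r₀ + d) + r / d * d := by omega
    simp only [Set.mem_setOf_eq, h3, Nat.add_mul_mod_self_right, Nat.add_mod_right,
      Nat.mod_eq_of_lt (hS r₀ hr₀)]
    exact hr₀

lemma sval_spec {d : ℕ} (hd : 0 < d) {S : Finset ℕ} (hS : ∀ r ∈ S, r < d)
    (hne : S.Nonempty) (r : ℕ) : 0 < sval d S r ∧ (r + sval d S r) % d ∈ S :=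
  Nat.sInf_mem (sval_set_nonempty hd hS hne r)

lemma key_inj_aux {d : ℕ} {S : Finset ℕ} {r r' t t' : ℕ}
    (hr' : r' ∈ S) (hrd' : r' < d) (ht' : 0 < t')
    (hts : t ≤ sval d S r) (hlt : t' < t) (heq : (r + t) % d = (r' + t') % d) : False := by
  have hu : r + t = (r + (t - t')) + t' := by omega
  have hmod : (r + (t - t')) % d = r' := by
    have h1 : (r + (t - t')) + t' ≡ r' + t' [MOD d] := by rw [← hu]; exact heq
    have h2 : r + (t - t') ≡ r' [MOD d] := Nat.ModEq.add_right_cancel' t' h1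
    rw [Nat.ModEq] at h2
    rw [h2, Nat.mod_eq_of_lt hrd']
  have hlt2 : t - t' < sInf {s | 0 < s ∧ (r + s) % d ∈ S} := by
    have : t - t' < t := by omega
    calc t - t' < t := this
      _ ≤ sval d S r := hts
  exact Nat.notMem_of_lt_sInf hlt2 ⟨by omega, by rw [hmod]; exact hr'⟩

lemma key_inj {d : ℕ} {S : Finset ℕ} {r r' t t' : ℕ}
    (hr : r ∈ S) (hr' : r' ∈ S) (hrd : r < d) (hrd' : r' < d)
    (ht : 0 < t) (ht' : 0 < t') (hts : t ≤ sval d S r) (hts' : t' ≤ sval d S r')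
    (heq : (r + t) % d = (r' + t') % d) : r = r' ∧ t = t' := by
  rcases Nat.lt_trichotomy t t' with h | h | h
  · exact absurd (key_inj_aux hr hrd ht hts' h heq.symm) (by simp)
  · subst h
    have h2 : r ≡ r' [MOD d] := Nat.ModEq.add_right_cancel' t heq
    rw [Nat.ModEq, Nat.mod_eq_of_lt hrd, Nat.mod_eq_of_lt hrd'] at h2
    exact ⟨h2, rfl⟩
  · exact absurd (key_inj_aux hr' hrd' ht' hts h heq) (by simp)

lemma sum_sval {d : ℕ} (hd : 0 < d) {S : Finset ℕ} (hS : ∀ r ∈ S, r < d)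
    (hne : S.Nonempty) : ∑ r ∈ S, sval d S r = d := by
  have h1 : ∀ r, sval d S r = (Finset.Icc 1 (sval d S r)).card := by
    intro r; rw [Nat.card_Icc]; omega
  have h2 : ∑ r ∈ S, sval d S r = (S.sigma fun r => Finset.Icc 1 (sval d S r)).card := by
    rw [Finset.card_sigma]
    exact Finset.sum_congr rfl fun r _ => h1 r
  have h3 : (S.sigma fun r => Finset.Icc 1 (sval d S r)).card = (Finset.range d).card := by
    apply Finset.card_bij (fun p _ => (p.1 + p.2) % d)
    · intro a _; exact Finset.mem_range.mpr (Nat.mod_lt _ hd)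
    · rintro ⟨a1, a2⟩ ha ⟨b1, b2⟩ hb h
      simp only [Finset.mem_sigma, Finset.mem_Icc] at ha hb
      obtain ⟨heq1, heq2⟩ := key_inj ha.1 hb.1 (hS _ ha.1) (hS _ hb.1)
        (by omega) (by omega) ha.2.2 hb.2.2 h
      subst heq1; subst heq2; rfl
    · intro m hm
      rw [Finset.mem_range] at hm
      have hne' := hne
      -- construct the preimage: previous element of S before m (cyclically)
      obtain ⟨r₀, hr₀⟩ := hne'
      have hr₀d : r₀ < d := hS r₀ hr₀
      set T : Set ℕ := {t | 0 < t ∧ (m + d - t) % d ∈ S} with hT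
      have hTw : ∃ w, w ∈ T ∧ w ≤ m + d := by
        by_cases hc : r₀ < m
        · refine ⟨m - r₀, ⟨by omega, ?_⟩, by omega⟩
          have h4 : m + d - (m - r₀) = r₀ + d := by omega
          rw [h4, Nat.add_mod_right, Nat.mod_eq_of_lt hr₀d]; exact hr₀
        · refine ⟨m + d - r₀, ⟨by omega, ?_⟩, by omega⟩
          have h4 : m + d - (m + d - r₀) = r₀ := by omega
          rw [h4, Nat.mod_eq_of_lt hr₀d]; exact hr₀
      obtain ⟨w, hwT, hwle⟩ := hTw
      have hTne : T.Nonempty := ⟨w, hwT⟩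
      set t := sInf T with htdef
      have htmem : t ∈ T := Nat.sInf_mem hTne
      obtain ⟨htpos, htS⟩ := htmem
      have htle : t ≤ m + d := le_trans (Nat.sInf_le hwT) hwle
      set r := (m + d - t) % d with hrdef
      have hrS : r ∈ S := htS
      have hrd : r < d := hS _ hrS
      have hrt : (r + t) % d = m := by
        rw [hrdef, Nat.mod_add_mod, Nat.sub_add_cancel htle, Nat.add_mod_right,
          Nat.mod_eq_of_lt hm]
      have htsval : t ≤ sval d S r := by
        by_contra hcon
        push_neg at hcon
        set u := sval d S r with hu
        have huspec := sval_spec hd hS hne r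
        have hmem2 : t - u ∈ T := by
          refine ⟨by omega, ?_⟩
          have h5 : m + d - (t - u) = (m + d - t) + u := by omega
          rw [h5, ← Nat.mod_add_mod]
          exact huspec.2
        have : sInf T ≤ t - u := Nat.sInf_le hmem2
        omega
      exact ⟨⟨r, t⟩, Finset.mem_sigma.mpr ⟨hrS, Finset.mem_Icc.mpr ⟨htpos, htsval⟩⟩, hrt⟩
  rw [h2, h3, Finset.card_range]


lemma sum_next_mod {d : ℕ} (hd : 0 < d) {S : Finset ℕ} (hS : ∀ r ∈ S, r < d)
    (hne : S.Nonempty) : ∑ r ∈ S, (r + sval d S r) % d = ∑ r ∈ S, r := by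
  set f : ℕ → ℕ := fun r => (r + sval d S r) % d with hf
  have hinj : ∀ x ∈ S, ∀ y ∈ S, f x = f y → x = y := by
    intro a ha b hb h
    exact (key_inj ha hb (hS _ ha) (hS _ hb) (sval_spec hd hS hne a).1
      (sval_spec hd hS hne b).1 le_rfl le_rfl h).1
  have himg : S.image f = S := by
    apply Finset.eq_of_subset_of_card_le
    · intro q hq
      rw [Finset.mem_image] at hq
      obtain ⟨r, hr, rfl⟩ := hq
      exact (sval_spec hd hS hne r).2
    · rw [Finset.card_image_of_injOn (fun a ha b hb h => hinj a ha b hb h)]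
  have h6 : ∑ q ∈ S.image f, (fun q => q) q = ∑ r ∈ S, (fun q => q) (f r) := Finset.sum_image hinj
  simp only [] at h6
  rw [himg] at h6
  exact h6.symm

lemma nextPt_eq {d : ℕ} (hd : 0 < d) {S : Finset ℕ} (hS : ∀ r ∈ S, r < d)
    (hne : S.Nonempty) (p : ℕ) : Spiral.nextPt d S p = p + sval d S (p % d) := by
  have hB := sval_set_nonempty hd hS hne (p % d)
  have hmem := Nat.sInf_mem hB
  obtain ⟨hpos, hin⟩ := hmem
  have hpos' : 0 < sval d S (p % d) := hpos
  have hin' : (p % d + sval d S (p % d)) % d ∈ S := hin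
  have hA : p + sval d S (p % d) ∈ {q : ℕ | p < q ∧ q % d ∈ S} := by
    refine ⟨by omega, ?_⟩
    rw [← Nat.mod_add_mod]
    exact hin'
  rw [Spiral.nextPt]
  apply le_antisymm
  · exact Nat.sInf_le hA
  · have hAne : {q : ℕ | p < q ∧ q % d ∈ S}.Nonempty := ⟨_, hA⟩
    have hq := Nat.sInf_mem hAne
    obtain ⟨hlt, hqS⟩ := hq
    have h2 : sval d S (p % d) ≤ sInf {q : ℕ | p < q ∧ q % d ∈ S} - p := by
      apply Nat.sInf_le
      refine ⟨by omega, ?_⟩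
      rw [Nat.mod_add_mod]
      have h3 : p + (sInf {q : ℕ | p < q ∧ q % d ∈ S} - p) = sInf {q : ℕ | p < q ∧ q % d ∈ S} := by
        omega
      rw [h3]; exact hqS
    omega

lemma nextPt_gt {d : ℕ} (hd : 0 < d) {S : Finset ℕ} (hS : ∀ r ∈ S, r < d)
    (hne : S.Nonempty) (p : ℕ) : p < Spiral.nextPt d S p := by
  rw [nextPt_eq hd hS hne p]
  have := (sval_spec hd hS hne (p % d)).1
  omega

lemma nextPt_le {d : ℕ} {S : Finset ℕ} {p q : ℕ} (hpq : p < q) (hq : q % d ∈ S) :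
    Spiral.nextPt d S p ≤ q := Nat.sInf_le ⟨hpq, hq⟩

lemma list_sum_map_add (l : List ℕ) (f g : ℕ → ℕ) :
    (l.map fun a => f a + g a).sum = (l.map f).sum + (l.map g).sum := by
  induction l with
  | nil => simp
  | cons a l ih => simp [ih]; omega

lemma list_sum_map_add' (l : List ℕ) (g : ℕ → ℕ) :
    (l.map fun a => a + g a).sum = l.sum + (l.map g).sum := by
  induction l with
  | nil => simp
  | cons a l ih => simp [ih]; omega

end SpiralAux


open Spiral SpiralAux in
lemma gOp_apply (d j : ℕ) (x : Fin d → ℕ) (i : Fin d) :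
    gOp d j x i =
      ∑ q ∈ ((((sortedPts d x).take (j-1)).toFinset ∪
        (((sortedPts d x).drop (j-1)).map
          (nextPt d ((((sortedPts d x).drop (j-1)).toFinset.image (· % d))))).toFinset).filter
        (fun q => q % d = i.val)), q / d := rfl


open SpiralAux in
open Spiral in
/-- For every `x ∈ ℕ^d` and every `j ∈ [d]`, the size satisfies
`n(g_j(x)) = n(x) + 1`. -/
theorem statement7 (d : ℕ) (hd : 1 ≤ d) (j : ℕ) (hj1 : 1 ≤ j) (hjd : j ≤ d)
    (x : Fin d → ℕ) : size (gOp d j x) = size x + 1 := by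

  classical
  have hd0 : 0 < d := hd
  rw [size]
  simp only [gOp_apply]
  set L := sortedPts d x with hL
  set low := L.take (j-1) with hlow
  set high := L.drop (j-1) with hhigh
  set S := high.toFinset.image (· % d) with hSdef
  set Q := low.toFinset ∪ (high.map (nextPt d S)).toFinset with hQ
  -- encoding facts
  set e : Fin d → ℕ := fun i => x i * d + i.val with he
  have hmodE : ∀ i : Fin d, e i % d = i.val := by
    intro i
    show (x i * d + i.val) % d = i.val
    rw [add_comm, Nat.add_mul_mod_self_right]
    exact Nat.mod_eq_of_lt i.isLt
  have hdivE : ∀ i : Fin d, e i / d = x i := by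
    intro i
    show (x i * d + i.val) / d = x i
    rw [add_comm, Nat.add_mul_div_right _ _ hd0, Nat.div_eq_of_lt i.isLt, zero_add]
  have heInj : Function.Injective e := by
    intro a b hab
    have h1 : e a % d = e b % d := by rw [hab]
    rw [hmodE, hmodE] at h1
    exact Fin.ext h1
  have hptsE : pts d x = Finset.image e Finset.univ := rfl
  have hmemPts : ∀ q ∈ pts d x, ∃ i : Fin d, e i = q := by
    intro q hq
    rw [hptsE, Finset.mem_image] at hq
    obtain ⟨i, _, hi⟩ := hq
    exact ⟨i, hi⟩
  -- facts about L
  have hLmem : ∀ q ∈ L, q ∈ pts d x := fun q hq => (Finset.mem_sort _).mp hq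
  have hLres : ∀ a ∈ L, ∀ b ∈ L, a % d = b % d → a = b := by
    intro a ha b hb hab
    obtain ⟨ia, rfl⟩ := hmemPts a (hLmem a ha)
    obtain ⟨ib, rfl⟩ := hmemPts b (hLmem b hb)
    rw [hmodE, hmodE] at hab
    rw [show ia = ib from Fin.ext hab]
  have hLnd : L.Nodup := Finset.sort_nodup _ _
  have hLsorted : L.Pairwise (· < ·) := (Finset.sortedLT_sort _).pairwise
  have hLlen : L.length = d := by
    rw [hL, sortedPts, Finset.length_sort, hptsE,
      Finset.card_image_of_injective _ heInj, Finset.card_univ, Fintype.card_fin]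
  have hsplit : low ++ high = L := List.take_append_drop _ _
  have hpairLH : ∀ a ∈ low, ∀ b ∈ high, a < b := by
    have hp : (low ++ high).Pairwise (· < ·) := by rw [hsplit]; exact hLsorted
    exact (List.pairwise_append.mp hp).2.2
  have hlhNd : (low ++ high).Nodup := by rw [hsplit]; exact hLnd
  have hlowNd : low.Nodup := hlhNd.of_append_left
  have hhighNd : high.Nodup := hlhNd.of_append_right
  have hhighPW : high.Pairwise (· < ·) := by
    have hp : (low ++ high).Pairwise (· < ·) := by rw [hsplit]; exact hLsorted
    exact (List.pairwise_append.mp hp).2.1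
  have hhighLen : high.length = d - (j-1) := by rw [hhigh, List.length_drop, hLlen]
  have hhighNe : high ≠ [] := by
    intro h
    rw [h] at hhighLen
    simp only [List.length_nil] at hhighLen
    omega
  have hmemhighL : ∀ a ∈ high, a ∈ L := by
    intro a ha; rw [← hsplit]; exact List.mem_append_right _ ha
  have hmemS : ∀ h ∈ high, h % d ∈ S := by
    intro h hh
    rw [hSdef, Finset.mem_image]
    exact ⟨h, List.mem_toFinset.mpr hh, rfl⟩
  have hSlt : ∀ r ∈ S, r < d := by
    intro r hr
    rw [hSdef, Finset.mem_image] at hr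
    obtain ⟨h, _, rfl⟩ := hr
    exact Nat.mod_lt _ hd0
  have hSne : S.Nonempty := by
    obtain ⟨a, ha⟩ := List.exists_mem_of_ne_nil high hhighNe
    exact ⟨a % d, hmemS a ha⟩
  -- nextPt facts
  have hnpEq : ∀ p, nextPt d S p = p + sval d S (p % d) := fun p => nextPt_eq hd0 hSlt hSne p
  have hnpGt : ∀ p, p < nextPt d S p := fun p => nextPt_gt hd0 hSlt hSne p
  have hnpCongr : high.map (nextPt d S) = high.map (fun h => h + sval d S (h % d)) :=
    List.map_congr_left (fun a _ => hnpEq a)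
  have hH'PW : (high.map (nextPt d S)).Pairwise (· < ·) := by
    rw [List.pairwise_map]
    refine hhighPW.imp_of_mem ?_
    intro a b ha hb hab
    exact lt_of_le_of_lt (nextPt_le hab (hmemS b hb)) (hnpGt b)
  have hH'Nd : (high.map (nextPt d S)).Nodup := hH'PW.imp (fun h => ne_of_lt h)
  have hdisj : Disjoint low.toFinset (high.map (nextPt d S)).toFinset := by
    rw [Finset.disjoint_left]
    intro a ha hb
    rw [List.mem_toFinset] at ha hb
    rw [List.mem_map] at hb
    obtain ⟨h, hh, hnph⟩ := hb
    have h1 : h < nextPt d S h := hnpGt h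
    have h2 : a < h := hpairLH a ha h hh
    omega
  -- residues
  have hresNd : (high.map (· % d)).Nodup := by
    refine List.Nodup.map_on ?_ hhighNd
    intro a ha b hb hab
    exact hLres a (hmemhighL a ha) b (hmemhighL b hb) hab
  have hresFin : (high.map (· % d)).toFinset = S := by
    rw [hSdef]
    ext r
    simp only [List.mem_toFinset, List.mem_map, Finset.mem_image]
  -- sums over lists
  have hsumList : ∀ (l : List ℕ), l.Nodup → ∀ f : ℕ → ℕ,
      ∑ q ∈ l.toFinset, f q = (l.map f).sum := by
    intro l hl f
    exact List.sum_toFinset f hl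
  have hQsum : ∀ f : ℕ → ℕ,
      ∑ q ∈ Q, f q = (low.map f).sum + ((high.map (nextPt d S)).map f).sum := by
    intro f
    rw [hQ, Finset.sum_union hdisj, hsumList low hlowNd, hsumList _ hH'Nd]
  have hPsum : ∀ f : ℕ → ℕ, ∑ q ∈ pts d x, f q = (low.map f).sum + (high.map f).sum := by
    intro f
    have h1 : pts d x = L.toFinset := by
      rw [hL, sortedPts, Finset.sort_toFinset]
    rw [h1, hsumList L hLnd f, ← hsplit, List.map_append, List.sum_append]
  have hsvalSum : (high.map (fun h => sval d S (h % d))).sum = ∑ r ∈ S, sval d S r := by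
    have h1 := hsumList _ hresNd (sval d S)
    rw [hresFin] at h1
    rw [h1, List.map_map]
    rfl
  -- key sum identities
  have he1 : ∑ q ∈ Q, q = (∑ q ∈ pts d x, q) + d := by
    have h1 : ∑ q ∈ Q, q = low.sum + (high.map (nextPt d S)).sum := by
      simpa [Function.comp_def] using hQsum (fun q => q)
    have h2 : ∑ q ∈ pts d x, q = low.sum + high.sum := by
      simpa using hPsum (fun q => q)
    have h3 : (high.map (nextPt d S)).sum = high.sum + d := by
      rw [hnpCongr, list_sum_map_add', hsvalSum, sum_sval hd0 hSlt hSne]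
    omega
  have he2 : ∑ q ∈ Q, q % d = ∑ q ∈ pts d x, q % d := by
    have h1 := hQsum (· % d)
    have h2 := hPsum (· % d)
    have h3 : (high.map (nextPt d S)).map (· % d) =
        (high.map (· % d)).map (fun r => (r + sval d S r) % d) := by
      rw [hnpCongr, List.map_map, List.map_map]
      refine List.map_congr_left ?_
      intro a _
      show (a + sval d S (a % d)) % d = (a % d + sval d S (a % d)) % d
      rw [Nat.mod_add_mod]
    have h4 : ((high.map (· % d)).map (fun r => (r + sval d S r) % d)).sum
        = ∑ r ∈ S, (r + sval d S r) % d := by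
      have h6 := hsumList _ hresNd (fun r => (r + sval d S r) % d)
      rw [hresFin] at h6
      rw [← h6]
    have h5 : ∑ r ∈ S, r = (high.map (· % d)).sum := by
      have h6 := hsumList _ hresNd (fun r => r)
      rw [hresFin] at h6
      rw [h6, List.map_id']
    have h7 : ((high.map (nextPt d S)).map (· % d)).sum = (high.map (· % d)).sum := by
      rw [h3, h4, sum_next_mod hd0 hSlt hSne, h5]
    omega
  have he3 : ∀ T : Finset ℕ, ∑ q ∈ T, q = d * (∑ q ∈ T, q / d) + ∑ q ∈ T, q % d := by
    intro T
    rw [Finset.mul_sum, ← Finset.sum_add_distrib]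
    exact Finset.sum_congr rfl fun q _ => (Nat.div_add_mod q d).symm
  have he4 : ∑ q ∈ pts d x, q / d = size x := by
    rw [hptsE, Finset.sum_image (fun a _ b _ h => heInj h), size]
    exact Finset.sum_congr rfl fun i _ => hdivE i
  have hfinal : d * (∑ q ∈ Q, q / d) = d * (size x + 1) := by
    have h1 := he3 Q
    have h2 := he3 (pts d x)
    rw [Nat.mul_add, mul_one, ← he4]
    omega
  have hQdiv : ∑ q ∈ Q, q / d = size x + 1 := Nat.eq_of_mul_eq_mul_left hd0 hfinal
  have hfib : ∑ i : Fin d, ∑ q ∈ Q.filter (fun q => q % d = i.val), q / d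
      = ∑ q ∈ Q, q / d := by
    rw [← Finset.sum_fiberwise_of_maps_to (t := Finset.univ)
      (g := fun q : ℕ => (⟨q % d, Nat.mod_lt _ hd0⟩ : Fin d))
      (fun q _ => Finset.mem_univ _) (fun q => q / d)]
    refine Finset.sum_congr rfl fun i _ => ?_
    congr 1
    refine Finset.filter_congr ?_
    intro q _
    simp [Fin.ext_iff]
  rw [hfib, hQdiv]
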